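/- arXiv:2001.06623 — 6 statements merged into one kernel-verified Lean document; each statement's English description precedes it below -/
import Mathlib

section
/- Let α > 0 be a real number. Then −∫₀¹ e^{−t} t^{α−1} log t dt < (2α+1)/(α²(α+1)²) + (cosh(1) − 1)/(α+2)². -/
open Real MeasureTheory Set intervalIntegral

private lemma auxF_cont (s : ℝ) (hs : -1 < s) :
    ContinuousOn (fun x : ℝ => (x ^ (s+1) - x ^ (s+1) * Real.log (x ^ (s+1))) / (s+1)^2)
      (Icc 0 1) := by
  have hc : ContinuousOn (fun x : ℝ => x ^ (s+1)) (Icc (0:ℝ) 1) := by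
    intro x _
    exact (Real.continuousAt_rpow_const x (s+1) (Or.inr (by linarith))).continuousWithinAt
  exact (hc.sub (Real.continuous_mul_log.comp_continuousOn hc)).div_const _

private lemma auxF_deriv (s : ℝ) (hs : -1 < s) {x : ℝ} (hx0 : 0 < x) :
    HasDerivAt (fun x : ℝ => (x ^ (s+1) - x ^ (s+1) * Real.log (x ^ (s+1))) / (s+1)^2)
      (x ^ s * (-Real.log x)) x := by
  have hs1 : s + 1 ≠ 0 := by linarith
  have h1 : HasDerivAt (fun x : ℝ => x ^ (s+1)) ((s+1) * x ^ s) x := by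
    simpa using Real.hasDerivAt_rpow_const (p := s+1) (Or.inl hx0.ne')
  have h2 : HasDerivAt Real.log x⁻¹ x := Real.hasDerivAt_log hx0.ne'
  have hd : HasDerivAt (fun y : ℝ => (y ^ (s+1) - y ^ (s+1) * ((s+1) * Real.log y)) / (s+1)^2)
      (x ^ s * (-Real.log x)) x := by
    have h3 : HasDerivAt (fun y : ℝ => (s+1) * Real.log y) ((s+1) * x⁻¹) x := h2.const_mul (s+1)
    have := (h1.sub (h1.mul h3)).div_const ((s+1)^2)
    refine this.congr_deriv ?_
    have hxs : x ^ (s+1) = x ^ s * x := Real.rpow_add_one hx0.ne' s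
    rw [hxs]
    field_simp
    ring
  refine hd.congr_of_eventuallyEq ?_
  filter_upwards [eventually_gt_nhds hx0] with y hy
  rw [Real.log_rpow hy]

private lemma auxF_nonneg (s : ℝ) {x : ℝ} (hx : x ∈ Ioo (0:ℝ) 1) :
    0 ≤ x ^ s * (-Real.log x) :=
  mul_nonneg (Real.rpow_nonneg hx.1.le s)
    (by linarith [Real.log_nonpos hx.1.le hx.2.le])

private lemma aux_int (s : ℝ) (hs : -1 < s) :
    IntegrableOn (fun t : ℝ => t ^ s * (-Real.log t)) (Ioc (0:ℝ) 1) :=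
  integrableOn_deriv_of_nonneg (auxF_cont s hs)
    (fun x hx => auxF_deriv s hs hx.1) (fun x hx => auxF_nonneg s hx)

private lemma aux_val (s : ℝ) (hs : -1 < s) :
    ∫ t in (0:ℝ)..1, t ^ s * (-Real.log t) = 1/(s+1)^2 := by
  have hs1 : s + 1 ≠ 0 := by linarith
  have hint : IntervalIntegrable (fun t : ℝ => t ^ s * (-Real.log t)) volume 0 1 := by
    rw [intervalIntegrable_iff_integrableOn_Ioc_of_le zero_le_one]
    exact aux_int s hs
  rw [integral_eq_sub_of_hasDeriv_right_of_le zero_le_one (auxF_cont s hs)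
    (fun x hx => (auxF_deriv s hs hx.1).hasDerivWithinAt) hint]
  rw [Real.one_rpow, Real.zero_rpow hs1]
  simp

theorem stmt_0 (α : ℝ) (hα : 0 < α) :
    -(∫ t in (0:ℝ)..1, Real.exp (-t) * t ^ (α - 1) * Real.log t) <
      (2 * α + 1) / (α ^ 2 * (α + 1) ^ 2) + (Real.cosh 1 - 1) / (α + 2) ^ 2 := by
  have hs1 : (-1:ℝ) < α - 1 := by linarith
  have hs2 : (-1:ℝ) < α := by linarith
  have hs3 : (-1:ℝ) < α + 1 := by linarith
  have h1 := aux_int (α-1) hs1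
  have h2 := aux_int α hs2
  have h3 := aux_int (α+1) hs3
  set f1 : ℝ → ℝ := fun t => t ^ (α-1) * (-Real.log t) with hf1
  set f2 : ℝ → ℝ := fun t => t ^ α * (-Real.log t) with hf2
  set f3 : ℝ → ℝ := fun t => t ^ (α+1) * (-Real.log t) with hf3
  set G : ℝ → ℝ := fun t => Real.exp (-t) * t ^ (α-1) * (-Real.log t) with hG
  -- rewrite LHS as a set integral of G
  have hLHS : -(∫ t in (0:ℝ)..1, Real.exp (-t) * t ^ (α - 1) * Real.log t)
      = ∫ t in Ioc (0:ℝ) 1, G t := by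
    rw [intervalIntegral.integral_of_le zero_le_one, ← MeasureTheory.integral_neg]
    refine setIntegral_congr_fun measurableSet_Ioc (fun t _ => ?_)
    simp only [hG, mul_neg, neg_neg]
  -- integrability of G
  have hGcont : ContinuousOn G (Ioc (0:ℝ) 1) := by
    intro x hx
    have hc : ContinuousAt G x := by
      have ha : ContinuousAt (fun t : ℝ => t ^ (α-1)) x :=
        Real.continuousAt_rpow_const _ _ (Or.inl hx.1.ne')
      exact ((Real.continuous_exp.comp continuous_neg).continuousAt.mul ha).mul
        ((Real.continuousAt_log hx.1.ne').neg)
    exact hc.continuousWithinAt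
  have hGint : IntegrableOn G (Ioc (0:ℝ) 1) := by
    refine h1.mono' (hGcont.aestronglyMeasurable measurableSet_Ioc) ?_
    filter_upwards [ae_restrict_mem measurableSet_Ioc] with t ht
    have hlog : Real.log t ≤ 0 := Real.log_nonpos ht.1.le ht.2
    have hrp : (0:ℝ) ≤ t ^ (α-1) := Real.rpow_nonneg ht.1.le _
    have hexp1 : Real.exp (-t) ≤ 1 := Real.exp_le_one_iff.mpr (by linarith [ht.1])
    have hexp0 : (0:ℝ) < Real.exp (-t) := Real.exp_pos _
    have : ‖G t‖ = Real.exp (-t) * t ^ (α-1) * (-Real.log t) := by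
      rw [Real.norm_eq_abs, abs_of_nonneg]
      exact mul_nonneg (mul_nonneg hexp0.le hrp) (by linarith)
    rw [this]
    show Real.exp (-t) * t ^ (α-1) * (-Real.log t) ≤ t ^ (α-1) * (-Real.log t)
    nlinarith [mul_nonneg (sub_nonneg.mpr hexp1) (mul_nonneg hrp (neg_nonneg.mpr hlog))]
  -- pointwise bound
  have hpt : ∀ t ∈ Ioc (0:ℝ) 1, G t ≤ f1 t - f2 t + (1/2) * f3 t := by
    intro t ht
    have ht0 : 0 < t := ht.1
    have hlog : Real.log t ≤ 0 := Real.log_nonpos ht0.le ht.2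
    have hrp : (0:ℝ) ≤ t ^ (α-1) := Real.rpow_nonneg ht0.le _
    have hta : t ^ α = t ^ (α-1) * t := by
      rw [show α = α - 1 + 1 by ring, Real.rpow_add_one ht0.ne']
      ring_nf
    have hta1 : t ^ (α+1) = t ^ (α-1) * t * t := by
      rw [show α + 1 = (α - 1) + 1 + 1 by ring, Real.rpow_add_one ht0.ne',
        Real.rpow_add_one ht0.ne']
    have hexp : Real.exp (-t) ≤ 1 - t + t^2/2 := by
      have hq := Real.quadratic_le_exp_of_nonneg ht0.le
      have hp : (0:ℝ) < 1 - t + t^2/2 := by nlinarith [sq_nonneg (t-1)]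
      have key : 1 ≤ (1 - t + t^2/2) * Real.exp t := by
        nlinarith [mul_nonneg hp.le (sub_nonneg.mpr hq), sq_nonneg (t*t)]
      have hmul : Real.exp (-t) * Real.exp t = 1 := by
        rw [← Real.exp_add]; simp
      nlinarith [Real.exp_pos (-t), Real.exp_pos t]
    simp only [hG, hf1, hf2, hf3, hta, hta1]
    nlinarith [mul_nonneg hrp (neg_nonneg.mpr hlog)]
  -- integral comparison
  have hFint : IntegrableOn (fun t => f1 t - f2 t + (1/2) * f3 t) (Ioc (0:ℝ) 1) :=
    (h1.sub h2).add (h3.const_mul _)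
  have hmono : ∫ t in Ioc (0:ℝ) 1, G t ≤ ∫ t in Ioc (0:ℝ) 1, (f1 t - f2 t + (1/2) * f3 t) :=
    setIntegral_mono_on hGint hFint measurableSet_Ioc hpt
  have hsplit : ∫ t in Ioc (0:ℝ) 1, (f1 t - f2 t + (1/2) * f3 t)
      = (∫ t in Ioc (0:ℝ) 1, f1 t) - (∫ t in Ioc (0:ℝ) 1, f2 t)
        + (1/2) * ∫ t in Ioc (0:ℝ) 1, f3 t := by
    have hsub : IntegrableOn (fun t => f1 t - f2 t) (Ioc (0:ℝ) 1) := h1.sub h2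
    have hcm : IntegrableOn (fun t => (1/2:ℝ) * f3 t) (Ioc (0:ℝ) 1) := h3.const_mul _
    rw [MeasureTheory.integral_add hsub hcm, MeasureTheory.integral_sub h1 h2,
      MeasureTheory.integral_const_mul]
  have hv1 : ∫ t in Ioc (0:ℝ) 1, f1 t = 1/α^2 := by
    rw [← intervalIntegral.integral_of_le zero_le_one, hf1, aux_val (α-1) hs1]
    norm_num
  have hv2 : ∫ t in Ioc (0:ℝ) 1, f2 t = 1/(α+1)^2 := by
    rw [← intervalIntegral.integral_of_le zero_le_one, hf2, aux_val α hs2]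
  have hv3 : ∫ t in Ioc (0:ℝ) 1, f3 t = 1/(α+2)^2 := by
    rw [← intervalIntegral.integral_of_le zero_le_one, hf3, aux_val (α+1) hs3]
    ring_nf
  have hcosh : (1:ℝ)/2 < Real.cosh 1 - 1 := by
    rw [Real.cosh_eq]
    have hmul : Real.exp (-1) * Real.exp 1 = 1 := by rw [← Real.exp_add]; simp
    nlinarith [Real.exp_one_gt_d9, Real.exp_one_lt_d9, Real.exp_pos 1, Real.exp_pos (-1)]
  have heq : 1/α^2 - 1/(α+1)^2 = (2*α+1)/(α^2*(α+1)^2) := by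
    field_simp
    ring
  have hlast : (1:ℝ)/2 * (1/(α+2)^2) < (Real.cosh 1 - 1)/(α+2)^2 := by
    rw [mul_one_div]
    gcongr
  calc -(∫ t in (0:ℝ)..1, Real.exp (-t) * t ^ (α - 1) * Real.log t)
      ≤ 1/α^2 - 1/(α+1)^2 + (1/2) * (1/(α+2)^2) := by
        rw [hLHS]; rw [hsplit, hv1, hv2, hv3] at hmono; exact hmono
    _ < (2 * α + 1) / (α ^ 2 * (α + 1) ^ 2) + (Real.cosh 1 - 1) / (α + 2) ^ 2 := by
        rw [← heq]
        linarith [hlast]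
end

section
/- Let A be an n×n complex matrix, λ ∈ ℂⁿ and r ∈ ℝⁿ with r ≥ 0 entrywise, such that every eigenvalue μ of A (i.e., every element of the spectrum of A over ℂ) satisfies |μ − λ_i| ≤ r_i for some index i. For each i define f_i := max(Re(λ_i), ⌊Re(λ_i)⌋ − Re(λ_i), Re(λ_i) − ⌈Re(λ_i)⌉) + Im(λ_i)·𝗂. If |f_i| − r_i > 0 for every i, then no eigenvalue of A is a nonpositive integer, i.e., the spectrum of A is disjoint from {z ∈ ℂ : z = k for some integer k ≤ 0}. -/
lemma key_real_bound (x : ℝ) (k : ℤ) (hk : k ≤ 0) :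
    |max x (max ((⌊x⌋ : ℝ) - x) (x - (⌈x⌉ : ℝ)))| ≤ |(k : ℝ) - x| := by
  set M := max x (max ((⌊x⌋ : ℝ) - x) (x - (⌈x⌉ : ℝ))) with hM
  have hfl : (⌊x⌋ : ℝ) - x ≤ 0 := by
    have := Int.floor_le x; linarith
  have hce : x - (⌈x⌉ : ℝ) ≤ 0 := by
    have := Int.le_ceil x; linarith
  rcases le_or_gt x 0 with hx | hx
  · -- M ≤ 0, |M| = -M
    have hM0 : M ≤ 0 := by
      apply max_le hx (max_le hfl hce)
    rw [abs_of_nonpos hM0]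
    rcases le_or_gt (k : ℝ) x with hkx | hkx
    · have hkfl : k ≤ ⌊x⌋ := Int.le_floor.mpr hkx
      have : (k : ℝ) ≤ (⌊x⌋ : ℝ) := by exact_mod_cast hkfl
      have h1 : (⌊x⌋ : ℝ) - x ≤ M := le_max_of_le_right (le_max_left _ _)
      calc -M ≤ -((⌊x⌋ : ℝ) - x) := by linarith
        _ ≤ x - k := by linarith
        _ ≤ |(k : ℝ) - x| := by rw [abs_sub_comm]; exact le_abs_self _
    · have hkce : ⌈x⌉ ≤ k := Int.ceil_le.mpr hkx.le
      have : (⌈x⌉ : ℝ) ≤ (k : ℝ) := by exact_mod_cast hkce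
      have h1 : x - (⌈x⌉ : ℝ) ≤ M := le_max_of_le_right (le_max_right _ _)
      calc -M ≤ (⌈x⌉ : ℝ) - x := by linarith
        _ ≤ (k : ℝ) - x := by linarith
        _ ≤ |(k : ℝ) - x| := le_abs_self _
  · have hMx : M = x := by
      rw [hM, max_eq_left]
      exact max_le (by linarith) (by linarith)
    have hk' : (k : ℝ) ≤ 0 := by exact_mod_cast hk
    rw [hMx, abs_of_pos hx, abs_of_nonpos (by linarith)]
    linarith

theorem stmt_3 {n : ℕ} (A : Matrix (Fin n) (Fin n) ℂ) (lam : Fin n → ℂ) (r : Fin n → ℝ)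
    (hr : ∀ i, 0 ≤ r i)
    (hspec : ∀ μ ∈ spectrum ℂ A, ∃ i, ‖μ - lam i‖ ≤ r i)
    (f : Fin n → ℂ)
    (hf : ∀ i, f i =
      Complex.ofReal (max ((lam i).re) (max ((⌊(lam i).re⌋ : ℝ) - (lam i).re)
        ((lam i).re - (⌈(lam i).re⌉ : ℝ)))) + (lam i).im * Complex.I)
    (hpos : ∀ i, 0 < ‖f i‖ - r i) :
    ∀ μ ∈ spectrum ℂ A, ∀ k : ℤ, k ≤ 0 → μ ≠ (k : ℂ) := by
  intro μ hμ k hk hne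
  subst hne
  obtain ⟨i, hi⟩ := hspec _ hμ
  have hkey := key_real_bound (lam i).re k hk
  have h1 : ‖f i‖ ≤ ‖(k : ℂ) - lam i‖ := by
    rw [hf, Complex.norm_def, Complex.norm_def, Complex.normSq_apply, Complex.normSq_apply]
    apply Real.sqrt_le_sqrt
    simp only [Complex.add_re, Complex.ofReal_re, Complex.mul_re, Complex.I_re, Complex.I_im,
      Complex.ofReal_im, Complex.add_im, Complex.mul_im, Complex.sub_re, Complex.sub_im,
      Complex.intCast_re, Complex.intCast_im]
    nlinarith [sq_abs (max ((lam i).re) (max ((⌊(lam i).re⌋ : ℝ) - (lam i).re)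
        ((lam i).re - (⌈(lam i).re⌉ : ℝ)))), sq_abs ((k : ℝ) - (lam i).re),
      abs_nonneg (max ((lam i).re) (max ((⌊(lam i).re⌋ : ℝ) - (lam i).re)
        ((lam i).re - (⌈(lam i).re⌉ : ℝ)))), abs_nonneg ((k : ℝ) - (lam i).re)]
  have := hpos i
  linarith
end

section
/- Let λ ∈ ℂ, let Q be a p×p complex matrix and R a p×p real matrix with nonnegative entries such that |Q| ≤ R entrywise, and let t > 0. Then ‖exp((log t)·((λ−1)·I_p + Q)) − t^{λ−1}·I_p‖_∞ ≤ t^{Re(λ)−1} · |log t| · ‖R‖_∞ · e^{|log t|·‖R‖_∞}, where exp is the matrix exponential and t^{λ−1} the principal complex power of the positive real t. -/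
/-- The operator ∞-norm (maximum absolute row sum) of a real matrix. -/
noncomputable def normInfR {p : ℕ} (R : Matrix (Fin p) (Fin p) ℝ) : ℝ :=
  ⨆ i, ∑ j, |R i j|

/-- The operator ∞-norm (maximum absolute row sum) of a complex matrix. -/
noncomputable def normInfC {p : ℕ} (M : Matrix (Fin p) (Fin p) ℂ) : ℝ :=
  ⨆ i, ∑ j, ‖M i j‖

open NormedSpace
open scoped NNReal

attribute [local instance] Matrix.linftyOpNormedRing Matrix.linftyOpNormedAlgebra

lemma my_real_iSup_eq {p : ℕ} (g : Fin p → ℝ≥0) :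
    (⨆ i, (g i : ℝ)) = ↑(Finset.univ.sup g) := by
  rcases isEmpty_or_nonempty (Fin p) with h | h
  · simp [Real.iSup_of_isEmpty]
  · apply le_antisymm
    · exact ciSup_le fun i => by exact_mod_cast Finset.le_sup (Finset.mem_univ i)
    · obtain ⟨i, -, hi⟩ := Finset.exists_mem_eq_sup Finset.univ Finset.univ_nonempty g
      rw [hi]
      exact le_ciSup (f := fun i => ((g i : ℝ))) (Set.Finite.bddAbove (Set.finite_range _)) i

lemma my_normInfC_eq_norm {p : ℕ} (M : Matrix (Fin p) (Fin p) ℂ) : normInfC M = ‖M‖ := by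
  rw [Matrix.linfty_opNorm_def, normInfC, ← my_real_iSup_eq (fun i => ∑ j, ‖M i j‖₊)]
  congr 1; ext i
  simp

lemma my_norm_exp_sub_one_le {𝔸 : Type*} [NormedRing 𝔸] [NormedAlgebra ℂ 𝔸] [CompleteSpace 𝔸]
    (X : 𝔸) : ‖exp X - 1‖ ≤ ‖X‖ * Real.exp ‖X‖ := by
  have h := NormedSpace.exp_series_hasSum_exp' (𝕂 := ℂ) X
  have h1 : HasSum (fun n => (((n+1).factorial : ℂ)⁻¹) • X ^ (n+1)) (exp X - 1) := by
    have := (hasSum_nat_add_iff' 1).mpr h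
    simpa using this
  have hbound : ∀ n : ℕ, ‖(((n+1).factorial : ℂ)⁻¹) • X ^ (n+1)‖
      ≤ ‖X‖ * (‖X‖ ^ n / n.factorial) := by
    intro n
    rw [norm_smul, norm_inv]
    have h2 : ‖((n+1).factorial : ℂ)‖ = ((n+1).factorial : ℝ) := by
      simp
    rw [h2]
    have h3 : ‖X ^ (n+1)‖ ≤ ‖X‖ ^ (n+1) := norm_pow_le' X n.succ_pos
    have h4 : (((n+1).factorial : ℝ))⁻¹ ≤ ((n.factorial : ℝ))⁻¹ := by
      apply inv_anti₀
      · exact_mod_cast n.factorial_pos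
      · exact_mod_cast Nat.factorial_le (Nat.le_succ n)
    calc (((n+1).factorial : ℝ))⁻¹ * ‖X ^ (n+1)‖
        ≤ ((n.factorial : ℝ))⁻¹ * ‖X‖ ^ (n+1) := by
          apply mul_le_mul h4 h3 (norm_nonneg _) (by positivity)
      _ = ‖X‖ * (‖X‖ ^ n / n.factorial) := by ring
  have hsum : Summable (fun n : ℕ => ‖X‖ * (‖X‖ ^ n / n.factorial)) :=
    (Real.summable_pow_div_factorial ‖X‖).mul_left _
  have hsum1 : Summable (fun n : ℕ => ‖(((n+1).factorial : ℂ)⁻¹) • X ^ (n+1)‖) :=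
    Summable.of_nonneg_of_le (fun n => norm_nonneg _) hbound hsum
  calc ‖exp X - 1‖ = ‖∑' n : ℕ, (((n+1).factorial : ℂ)⁻¹) • X ^ (n+1)‖ := by
        rw [h1.tsum_eq]
    _ ≤ ∑' n : ℕ, ‖(((n+1).factorial : ℂ)⁻¹) • X ^ (n+1)‖ := norm_tsum_le_tsum_norm hsum1
    _ ≤ ∑' n : ℕ, ‖X‖ * (‖X‖ ^ n / n.factorial) := hsum1.tsum_le_tsum hbound hsum
    _ = ‖X‖ * ∑' n : ℕ, (‖X‖ ^ n / n.factorial) := tsum_mul_left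
    _ = ‖X‖ * Real.exp ‖X‖ := by
        rw [Real.exp_eq_exp_ℝ, NormedSpace.exp_eq_tsum_div]

theorem stmt_6 {p : ℕ} (lam : ℂ) (Q : Matrix (Fin p) (Fin p) ℂ)
    (R : Matrix (Fin p) (Fin p) ℝ)
    (hR : ∀ i j, 0 ≤ R i j)
    (hQR : ∀ i j, ‖Q i j‖ ≤ R i j)
    (t : ℝ) (ht : 0 < t) :
    normInfC
        (NormedSpace.exp ((Real.log t : ℂ) • ((lam - 1) • (1 : Matrix (Fin p) (Fin p) ℂ) + Q))
          - ((t : ℂ) ^ (lam - 1)) • (1 : Matrix (Fin p) (Fin p) ℂ)) ≤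
      t ^ (lam.re - 1) * |Real.log t| * normInfR R *
        Real.exp (|Real.log t| * normInfR R) := by
  set L : ℝ := Real.log t with hL
  set c : ℂ := (L : ℂ) * (lam - 1) with hc
  -- norm of Q bounded by normInfR R
  have hRnonneg : 0 ≤ normInfR R := by
    rcases isEmpty_or_nonempty (Fin p) with h | h
    · rw [normInfR, Real.iSup_of_isEmpty]
    · refine le_ciSup_of_le (Set.Finite.bddAbove (Set.finite_range _)) (Classical.arbitrary _) ?_
      positivity
  have hQle : ‖Q‖ ≤ normInfR R := by
    rw [← my_normInfC_eq_norm, normInfC, normInfR]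
    rcases isEmpty_or_nonempty (Fin p) with h | h
    · simp [Real.iSup_of_isEmpty]
    · refine ciSup_le fun i => ?_
      refine le_trans (Finset.sum_le_sum fun j _ => ?_)
        (le_ciSup (f := fun i => ∑ j, |R i j|) (Set.Finite.bddAbove (Set.finite_range _)) i)
      rw [abs_of_nonneg (hR i j)]
      exact hQR i j
  -- split exponent
  have hsplit : (L : ℂ) • ((lam - 1) • (1 : Matrix (Fin p) (Fin p) ℂ) + Q)
      = c • (1 : Matrix (Fin p) (Fin p) ℂ) + (L : ℂ) • Q := by
    rw [smul_add, smul_smul]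
  have hcomm : Commute (c • (1 : Matrix (Fin p) (Fin p) ℂ)) ((L : ℂ) • Q) :=
    ((Commute.one_left _).smul_left _).smul_right _
  have hexp1 : exp (c • (1 : Matrix (Fin p) (Fin p) ℂ))
      = Complex.exp c • (1 : Matrix (Fin p) (Fin p) ℂ) := by
    rw [← Algebra.algebraMap_eq_smul_one]
    erw [← algebraMap_exp_comm]
    rw [Complex.exp_eq_exp_ℂ,
      Algebra.algebraMap_eq_smul_one]
  have hpow : (t : ℂ) ^ (lam - 1) = Complex.exp c := by
    rw [Complex.cpow_def_of_ne_zero (by exact_mod_cast ht.ne'), hc, ← Complex.ofReal_log ht.le]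
  have key : exp ((L : ℂ) • ((lam - 1) • (1 : Matrix (Fin p) (Fin p) ℂ) + Q))
        - ((t : ℂ) ^ (lam - 1)) • (1 : Matrix (Fin p) (Fin p) ℂ)
      = Complex.exp c • (exp ((L : ℂ) • Q) - 1) := by
    rw [hsplit, Matrix.exp_add_of_commute _ _ hcomm, hexp1, hpow, smul_mul_assoc, one_mul, smul_sub]
  rw [key, my_normInfC_eq_norm, norm_smul]
  have hec : ‖Complex.exp c‖ = t ^ (lam.re - 1) := by
    rw [Complex.norm_exp, Real.rpow_def_of_pos ht]
    congr 1
    simp [hc, hL, Complex.mul_re]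
  rw [hec]
  have hXle : ‖(L : ℂ) • Q‖ ≤ |L| * normInfR R := by
    rw [norm_smul, Complex.norm_real, Real.norm_eq_abs]
    exact mul_le_mul_of_nonneg_left hQle (abs_nonneg _)
  have hmain : ‖exp ((L : ℂ) • Q) - 1‖ ≤ (|L| * normInfR R) * Real.exp (|L| * normInfR R) := by
    refine le_trans (my_norm_exp_sub_one_le _) ?_
    have := Real.exp_le_exp.mpr hXle
    exact mul_le_mul hXle this (Real.exp_nonneg _) (by positivity)
  calc t ^ (lam.re - 1) * ‖exp ((L : ℂ) • Q) - 1‖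
      ≤ t ^ (lam.re - 1) * ((|L| * normInfR R) * Real.exp (|L| * normInfR R)) :=
        mul_le_mul_of_nonneg_left hmain (Real.rpow_nonneg ht.le _)
    _ = t ^ (lam.re - 1) * |L| * normInfR R * Real.exp (|L| * normInfR R) := by ring
end

section
/- Let λ ∈ ℂ, m ≥ 1 an integer, and R a p×p real matrix with nonnegative entries. Let rr be the 1×p row vector with rr_j := max_i R_{ij}, and let 1_p be the all-ones column vector of length p. Define real p×p matrices 𝖲₁, …, 𝖲_m by 𝖲₁ := R and 𝖲_{k+1} := |λ−k−1|·𝖲_k + |∏_{i=1}^{k}(λ−i)|·R + (1_p·rr)·𝖲_k for k = 1, …, m−1. Then for any p×p complex matrices B₁, …, B_m satisfying |B_i − (λ−i)·I_p| ≤ R entrywise for all i, one has | B_m·B_{m−1}·⋯·B₁ − (∏_{i=1}^{m}(λ−i))·I_p | ≤ 𝖲_m entrywise. -/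
/-- The p×p matrix `1_p · rr`, where `rr_j = max_i R_{ij}`. -/
noncomputable def colMaxMat {p : ℕ} (R : Matrix (Fin p) (Fin p) ℝ) :
    Matrix (Fin p) (Fin p) ℝ :=
  Matrix.of fun _ j => ⨆ i, R i j

/-- The radius sequence 𝖲₁ := R,
`𝖲_{k+1} := |λ−k−1|·𝖲_k + |∏_{i=1}^{k}(λ−i)|·R + (1_p·rr)·𝖲_k` for k ≥ 1. -/
noncomputable def Sseq {p : ℕ} (lam : ℂ) (R : Matrix (Fin p) (Fin p) ℝ) :
    ℕ → Matrix (Fin p) (Fin p) ℝ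
  | 0 => R
  | 1 => R
  | (k + 2) => Norm.norm (lam - (k + 1) - 1) • Sseq lam R (k + 1) +
      Norm.norm (∏ i ∈ Finset.range (k + 1), (lam - (i + 1))) • R +
      colMaxMat R * Sseq lam R (k + 1)

lemma colMax_le {p : ℕ} (R : Matrix (Fin p) (Fin p) ℝ) (i a j : Fin p) :
    R i j ≤ colMaxMat R a j := by
  simp only [colMaxMat, Matrix.of_apply]
  exact le_ciSup (f := fun i => R i j) (Set.Finite.bddAbove (Set.finite_range _)) i

lemma Sseq_nonneg {p : ℕ} (lam : ℂ) (R : Matrix (Fin p) (Fin p) ℝ)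
    (hR : ∀ i j, 0 ≤ R i j) : ∀ n, ∀ a b, 0 ≤ Sseq lam R n a b := by
  intro n
  induction n using Nat.strong_induction_on with
  | _ n ih =>
    match n with
    | 0 => exact hR
    | 1 => exact hR
    | (k+2) =>
      intro a b
      have h1 := ih (k+1) (by omega)
      simp only [Sseq, Matrix.add_apply, Matrix.smul_apply, Matrix.mul_apply, smul_eq_mul]
      have t1 : 0 ≤ Norm.norm (lam - (k+1) - 1) * Sseq lam R (k+1) a b :=
        mul_nonneg (norm_nonneg _) (h1 a b)
      have t2 : 0 ≤ Norm.norm (∏ i ∈ Finset.range (k+1), (lam - (i+1))) * R a b :=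
        mul_nonneg (norm_nonneg _) (hR a b)
      have t3 : 0 ≤ ∑ j, colMaxMat R a j * Sseq lam R (k+1) j b :=
        Finset.sum_nonneg fun j _ =>
          mul_nonneg (le_trans (hR a j) (colMax_le R a a j)) (h1 j b)
      linarith

lemma key {p : ℕ} (lam : ℂ) (R : Matrix (Fin p) (Fin p) ℝ) (hR : ∀ i j, 0 ≤ R i j) :
    ∀ (n : ℕ) (B : Fin (n+1) → Matrix (Fin p) (Fin p) ℂ),
      (∀ i : Fin (n+1), ∀ a b, Norm.norm
        (B i a b - ((lam - ((i : ℕ) + 1)) • (1 : Matrix (Fin p) (Fin p) ℂ)) a b) ≤ R a b) →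
      ∀ a b, Norm.norm (((List.ofFn B).reverse.prod) a b -
          ((∏ i ∈ Finset.range (n+1), (lam - (i + 1))) • (1 : Matrix (Fin p) (Fin p) ℂ)) a b) ≤
        Sseq lam R (n+1) a b := by
  intro n
  induction n with
  | zero =>
    intro B hB a b
    have := hB 0 a b
    simpa [Sseq] using this
  | succ k ih =>
    intro B hB a b
    set P : Matrix (Fin p) (Fin p) ℂ :=
      (List.ofFn (fun i : Fin (k+1) => B i.castSucc)).reverse.prod with hPdef
    set c : ℂ := ∏ i ∈ Finset.range (k+1), (lam - (i + 1)) with hc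
    set μ : ℂ := lam - (((k:ℕ):ℂ) + 1 + 1) with hμ
    have hprod : (List.ofFn B).reverse.prod = B (Fin.last (k+1)) * P := by
      rw [List.ofFn_succ', List.concat_eq_append, List.reverse_append]
      simp [hPdef]
    set L := B (Fin.last (k+1)) with hL
    set E : Matrix (Fin p) (Fin p) ℂ := L - μ • 1 with hEdef
    set F : Matrix (Fin p) (Fin p) ℂ := P - c • 1 with hFdef
    have hB' : ∀ i : Fin (k+1), ∀ a b, Norm.norm
        ((fun i : Fin (k+1) => B i.castSucc) i a b -
          ((lam - ((i : ℕ) + 1)) • (1 : Matrix (Fin p) (Fin p) ℂ)) a b) ≤ R a b := by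
      intro i a b
      have := hB i.castSucc a b
      simpa [Fin.coe_castSucc] using this
    have hF : ∀ a b, Norm.norm (F a b) ≤ Sseq lam R (k+1) a b := by
      intro a b
      have := ih _ hB' a b
      rw [hFdef]
      simp only [Matrix.sub_apply, Matrix.smul_apply, smul_eq_mul, ← hPdef, ← hc] at this ⊢
      exact this
    have hE : ∀ a b, Norm.norm (E a b) ≤ R a b := by
      intro a b
      have := hB (Fin.last (k+1)) a b
      simp only [Fin.val_last] at this
      rw [hEdef]
      simp only [Matrix.sub_apply, Matrix.smul_apply, smul_eq_mul, hμ] at this ⊢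
      convert this using 3
      push_cast
      ring
    have hEF : L * P - (c * μ) • (1 : Matrix (Fin p) (Fin p) ℂ) = μ • F + c • E + E * F := by
      rw [hEdef, hFdef]
      simp only [sub_mul, mul_sub, Matrix.smul_mul, Matrix.mul_smul, one_mul, mul_one,
        smul_smul, smul_sub]
      module
    have hprodrw : ∏ i ∈ Finset.range (k+1+1), (lam - (i + 1)) = c * μ := by
      rw [Finset.prod_range_succ, hc, hμ]
      push_cast
      ring
    rw [hprod, hprodrw]
    have hexp : (L * P) a b - ((c*μ) • (1 : Matrix (Fin p) (Fin p) ℂ)) a b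
        = μ * F a b + c * E a b + ∑ j, E a j * F j b := by
      rw [← Matrix.sub_apply, hEF]
      simp [Matrix.add_apply, Matrix.smul_apply, Matrix.mul_apply, smul_eq_mul]
    rw [hexp]
    have hsum : Norm.norm (∑ j, E a j * F j b)
        ≤ ∑ j, colMaxMat R a j * Sseq lam R (k+1) j b := by
      refine le_trans (norm_sum_le _ _) ?_
      refine Finset.sum_le_sum fun j _ => ?_
      rw [norm_mul]
      exact mul_le_mul (le_trans (hE a j) (colMax_le R a a j)) (hF j b)
        (norm_nonneg _) (le_trans (hR a j) (colMax_le R a a j))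
    have habs : Norm.norm (μ * F a b + c * E a b + ∑ j, E a j * F j b)
        ≤ Norm.norm μ * Norm.norm (F a b) + Norm.norm c * Norm.norm (E a b)
          + Norm.norm (∑ j, E a j * F j b) := by
      refine le_trans (norm_add_le _ _) ?_
      have := norm_add_le (μ * F a b) (c * E a b)
      simp only [norm_mul] at this ⊢
      linarith
    refine le_trans habs ?_
    have hS : Sseq lam R (k+1+1) a b
        = Norm.norm (lam - (↑k + 1) - 1) * Sseq lam R (k+1) a b
          + Norm.norm (∏ i ∈ Finset.range (k+1), (lam - (↑i + 1))) * R a b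
          + ∑ j, colMaxMat R a j * Sseq lam R (k+1) j b := by
      simp [Sseq, Matrix.add_apply, Matrix.smul_apply, Matrix.mul_apply, smul_eq_mul]
    rw [hS]
    have hμeq : Norm.norm μ = Norm.norm (lam - (↑k + 1) - 1) := by
      rw [hμ]; congr 1; ring
    have h1 : Norm.norm μ * Norm.norm (F a b)
        ≤ Norm.norm (lam - (↑k + 1) - 1) * Sseq lam R (k+1) a b := by
      rw [hμeq]
      exact mul_le_mul_of_nonneg_left (hF a b) (norm_nonneg _)
    have h2 : Norm.norm c * Norm.norm (E a b)
        ≤ Norm.norm (∏ i ∈ Finset.range (k+1), (lam - (↑i + 1))) * R a b := by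
      rw [← hc]
      exact mul_le_mul_of_nonneg_left (hE a b) (norm_nonneg _)
    linarith

theorem stmt_10 {p : ℕ} (lam : ℂ) (m : ℕ) (hm : 1 ≤ m)
    (R : Matrix (Fin p) (Fin p) ℝ) (hR : ∀ i j, 0 ≤ R i j)
    (B : Fin m → Matrix (Fin p) (Fin p) ℂ)
    (hB : ∀ i : Fin m, ∀ a b, Norm.norm
      (B i a b - ((lam - ((i : ℕ) + 1)) • (1 : Matrix (Fin p) (Fin p) ℂ)) a b) ≤ R a b) :
    ∀ a b, Norm.norm
        (((List.ofFn B).reverse.prod) a b -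
          ((∏ i ∈ Finset.range m, (lam - (i + 1))) • (1 : Matrix (Fin p) (Fin p) ℂ)) a b) ≤
      Sseq lam R m a b := by
  obtain ⟨n, rfl⟩ : ∃ n, m = n + 1 := ⟨m - 1, by omega⟩
  exact key lam R hR n B hB
end

section
/- Let n₁, …, n_s ≥ 1 be integers with p = n₁ + ⋯ + n_s, and let M = diag(N_{n₁}, …, N_{n_s}) be the p×p block-diagonal matrix whose ℓ-th block is the n_ℓ×n_ℓ nilpotent Jordan block N_{n_ℓ} (ones on the superdiagonal, zeros elsewhere); set n_max := max_ℓ n_ℓ. Let b₀, …, b_{n_max−1} ∈ ℂ and C := ∑_{i=0}^{n_max−1} b_i·M^i. Let R be a p×p real matrix with nonnegative entries; for each ℓ, let R^{(ℓ)} be the p×n_ℓ submatrix of R consisting of the columns with indices in block ℓ, let rc^{(ℓ)} ∈ ℝ^p be the column vector with rc^{(ℓ)}_i := max_j (R^{(ℓ)})_{ij}, let w^{(ℓ)} be the 1×n_ℓ row vector whose j-th entry (1 ≤ j ≤ n_ℓ) is ∑_{i=0}^{j−1} |b_i|, and let Q := [rc^{(1)}·w^{(1)}, …, rc^{(s)}·w^{(s)}]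 be the p×p matrix formed by these rank-one column blocks. Then R·|C| ≤ Q entrywise. -/
theorem stmt_14 {s : ℕ} (hs : 1 ≤ s) (n : Fin s → ℕ) (hn : ∀ ℓ, 1 ≤ n ℓ)
    -- `M` is the block-diagonal matrix of nilpotent Jordan blocks, indexed by
    -- the sigma type `(ℓ : Fin s) × Fin (n ℓ)` (block `ℓ`, position within block).
    (M : Matrix ((ℓ : Fin s) × Fin (n ℓ)) ((ℓ : Fin s) × Fin (n ℓ)) ℂ)
    (hM : M = Matrix.of fun a b =>
      if a.1 = b.1 ∧ (b.2 : ℕ) = (a.2 : ℕ) + 1 then 1 else 0)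
    (b : ℕ → ℂ)
    (C : Matrix ((ℓ : Fin s) × Fin (n ℓ)) ((ℓ : Fin s) × Fin (n ℓ)) ℂ)
    (hC : C = ∑ i ∈ Finset.range (Finset.univ.sup n), b i • M ^ i)
    (R : Matrix ((ℓ : Fin s) × Fin (n ℓ)) ((ℓ : Fin s) × Fin (n ℓ)) ℝ)
    (hR : ∀ i j, 0 ≤ R i j) :
    ∀ i j, (R * Matrix.of fun a c => ‖C a c‖) i j ≤
      (⨆ a : Fin (n j.1), R i ⟨j.1, a⟩) *
        ∑ t ∈ Finset.range ((j.2 : ℕ) + 1), ‖b t‖ := by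
  have hpow : ∀ (t : ℕ) (a c : (ℓ : Fin s) × Fin (n ℓ)),
      (M ^ t) a c = if a.1 = c.1 ∧ (c.2 : ℕ) = (a.2 : ℕ) + t then 1 else 0 := by
    intro t
    induction t with
    | zero =>
      intro a c
      have heq : (a = c) ↔ (a.1 = c.1 ∧ (c.2 : ℕ) = (a.2 : ℕ) + 0) := by
        constructor
        · rintro rfl; exact ⟨rfl, rfl⟩
        · rintro ⟨h1, h2⟩
          obtain ⟨a1, a2⟩ := a; obtain ⟨c1, c2⟩ := c
          dsimp only at h1 h2
          cases h1
          have : a2 = c2 := Fin.ext (by omega)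
          rw [this]
      rw [pow_zero, Matrix.one_apply, if_congr heq rfl rfl]
    | succ t ih =>
      intro a c
      rw [pow_succ, Matrix.mul_apply]
      by_cases h : a.1 = c.1 ∧ (c.2 : ℕ) = (a.2 : ℕ) + (t + 1)
      · obtain ⟨h1, h2⟩ := h
        have hlt : (a.2 : ℕ) + t < n a.1 := by
          have h3 := c.2.isLt
          have h4 : n c.1 = n a.1 := by rw [h1]
          omega
        have e1 : (M ^ t) a ⟨a.1, ⟨(a.2 : ℕ) + t, hlt⟩⟩ = 1 := by
          rw [ih, if_pos]; exact ⟨rfl, rfl⟩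
        have e2 : M ⟨a.1, ⟨(a.2 : ℕ) + t, hlt⟩⟩ c = 1 := by
          rw [hM]
          simp only [Matrix.of_apply]
          rw [if_pos]
          exact ⟨h1, by omega⟩
        rw [Finset.sum_eq_single (⟨a.1, ⟨(a.2 : ℕ) + t, hlt⟩⟩ : (ℓ : Fin s) × Fin (n ℓ)),
          e1, e2, one_mul, if_pos ⟨h1, h2⟩]
        · intro e _ hne
          rw [ih]
          by_cases he : a.1 = e.1 ∧ (e.2 : ℕ) = (a.2 : ℕ) + t
          · exfalso
            apply hne
            obtain ⟨e1, e2⟩ := e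
            obtain ⟨he1, he2⟩ := he
            cases he1
            simp only [Sigma.mk.inj_iff, heq_eq_eq, true_and]
            exact Fin.ext (by simpa using he2)
          · rw [if_neg he, zero_mul]
        · intro hmem; exact absurd (Finset.mem_univ _) hmem
      · rw [if_neg h]
        apply Finset.sum_eq_zero
        intro e _
        rw [ih, hM]
        simp only [Matrix.of_apply]
        by_cases he1 : a.1 = e.1 ∧ (e.2 : ℕ) = (a.2 : ℕ) + t
        · by_cases he2 : e.1 = c.1 ∧ (c.2 : ℕ) = (e.2 : ℕ) + 1
          · exact absurd ⟨he1.1.trans he2.1, by omega⟩ h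
          · rw [if_neg he2, mul_zero]
        · rw [if_neg he1, zero_mul]
  intro i j
  have hsup : n j.1 ≤ Finset.univ.sup n := Finset.le_sup (Finset.mem_univ _)
  have hCe : ∀ k, C k j = if k.1 = j.1 ∧ (k.2 : ℕ) ≤ (j.2 : ℕ)
      then b ((j.2 : ℕ) - (k.2 : ℕ)) else 0 := by
    intro k
    rw [hC]
    simp only [Matrix.sum_apply, Matrix.smul_apply, hpow, smul_eq_mul]
    by_cases h : k.1 = j.1 ∧ (k.2 : ℕ) ≤ (j.2 : ℕ)
    · rw [if_pos h]
      rw [Finset.sum_eq_single ((j.2 : ℕ) - (k.2 : ℕ))]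
      · rw [if_pos ⟨h.1, by omega⟩, mul_one]
      · intro t _ ht
        rw [if_neg, mul_zero]
        rintro ⟨_, h2⟩; omega
      · intro hmem
        exfalso
        apply hmem
        apply Finset.mem_range.2
        have := j.2.isLt
        omega
    · rw [if_neg h]
      apply Finset.sum_eq_zero
      intro t _
      rw [if_neg, mul_zero]
      rintro ⟨h1, h2⟩
      exact h ⟨h1, by omega⟩
  rw [Matrix.mul_apply]
  simp only [Matrix.of_apply, hCe]
  have habs : ∀ k : (ℓ : Fin s) × Fin (n ℓ),
      ‖if k.1 = j.1 ∧ (k.2 : ℕ) ≤ (j.2 : ℕ)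
        then b ((j.2 : ℕ) - (k.2 : ℕ)) else 0‖
      = if k.1 = j.1 ∧ (k.2 : ℕ) ≤ (j.2 : ℕ)
        then ‖b ((j.2 : ℕ) - (k.2 : ℕ))‖ else 0 := by
    intro k
    split <;> simp
  simp only [habs]
  rw [← Finset.univ_sigma_univ, Finset.sum_sigma]
  rw [Finset.sum_eq_single j.1]
  · -- sum over a : Fin (n j.1)
    have hterm : ∀ a : Fin (n j.1),
        R i ⟨j.1, a⟩ * (if (⟨j.1, a⟩ : (ℓ : Fin s) × Fin (n ℓ)).1 = j.1 ∧ ((a : ℕ)) ≤ (j.2 : ℕ)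
          then ‖b ((j.2 : ℕ) - (a : ℕ))‖ else 0)
        ≤ (⨆ a : Fin (n j.1), R i ⟨j.1, a⟩) *
          (if (a : ℕ) ≤ (j.2 : ℕ) then ‖b ((j.2 : ℕ) - (a : ℕ))‖ else 0) := by
      intro a
      have hle : R i ⟨j.1, a⟩ ≤ ⨆ a : Fin (n j.1), R i ⟨j.1, a⟩ :=
        le_ciSup (f := fun a : Fin (n j.1) => R i ⟨j.1, a⟩)
          (Set.Finite.bddAbove (Set.finite_range _)) a
      have hpos : (0 : ℝ) ≤ if (a : ℕ) ≤ (j.2 : ℕ)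
          then ‖b ((j.2 : ℕ) - (a : ℕ))‖ else 0 := by positivity
      calc R i ⟨j.1, a⟩ * _ ≤ R i ⟨j.1, a⟩ *
            (if (a : ℕ) ≤ (j.2 : ℕ) then ‖b ((j.2 : ℕ) - (a : ℕ))‖ else 0) := by
              apply le_of_eq; congr 1; simp
        _ ≤ _ := mul_le_mul_of_nonneg_right hle hpos
    calc (∑ a : Fin (n j.1), R i ⟨j.1, a⟩ * _) ≤
        ∑ a : Fin (n j.1), (⨆ a : Fin (n j.1), R i ⟨j.1, a⟩) *
          (if (a : ℕ) ≤ (j.2 : ℕ) then ‖b ((j.2 : ℕ) - (a : ℕ))‖ else 0) :=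
        Finset.sum_le_sum fun a _ => hterm a
      _ = (⨆ a : Fin (n j.1), R i ⟨j.1, a⟩) *
          ∑ a : Fin (n j.1), (if (a : ℕ) ≤ (j.2 : ℕ)
            then ‖b ((j.2 : ℕ) - (a : ℕ))‖ else 0) := by
          rw [Finset.mul_sum]
      _ = (⨆ a : Fin (n j.1), R i ⟨j.1, a⟩) *
          ∑ t ∈ Finset.range ((j.2 : ℕ) + 1), ‖b t‖ := by
          congr 1
          rw [Fin.sum_univ_eq_sum_range (fun a => if a ≤ (j.2 : ℕ)
            then ‖b ((j.2 : ℕ) - a)‖ else 0)]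
          rw [← Finset.sum_subset (Finset.range_subset_range.2 (by have := j.2.isLt; omega) :
            Finset.range ((j.2 : ℕ) + 1) ⊆ Finset.range (n j.1))]
          · rw [← Finset.sum_range_reflect]
            apply Finset.sum_congr rfl
            intro x hx
            rw [Finset.mem_range] at hx
            rw [if_pos (show (j.2 : ℕ) + 1 - 1 - x ≤ (j.2 : ℕ) by omega)]
            have hxx : (j.2 : ℕ) - ((j.2 : ℕ) + 1 - 1 - x) = x := by omega
            rw [hxx]
          · intro x _ hx
            rw [Finset.mem_range] at hx
            rw [if_neg (show ¬ x ≤ (j.2 : ℕ) by omega)]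
  · intro ℓ _ hℓ
    apply Finset.sum_eq_zero
    intro a _
    rw [if_neg, mul_zero]
    rintro ⟨h1, _⟩
    exact hℓ h1
  · intro hmem; exact absurd (Finset.mem_univ _) hmem
end

section
/- Let λ ∈ ℂ with Re(λ) > 0, let n ≥ 1, and let N be the n×n nilpotent Jordan block (ones on the superdiagonal, zeros elsewhere). Then ∫₀^∞ e^{−t} exp((log t)·((λ−1)·I_n + N)) dt = ∑_{k=0}^{n−1} (Γ^{(k)}(λ)/k!) · N^k, where exp is the matrix exponential and Γ^{(k)} denotes the k-th derivative of the complex Gamma function. -/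
open Real Set MeasureTheory Filter Asymptotics Topology

noncomputable def fk (k : ℕ) : ℝ → ℂ := fun t => (Real.log t : ℂ) ^ k * (Real.exp (-t) : ℂ)

lemma fk_succ (k : ℕ) : (fun t : ℝ => Real.log t • fk k t) = fk (k+1) := by
  funext t
  simp only [fk, Complex.real_smul, pow_succ']
  ring

lemma fk_locInt (k : ℕ) : LocallyIntegrableOn (fk k) (Ioi 0) := by
  refine ContinuousOn.locallyIntegrableOn ?_ measurableSet_Ioi
  apply ContinuousOn.mul
  · exact (Complex.continuous_ofReal.comp_continuousOn
      (Real.continuousOn_log.mono (fun x hx => ne_of_gt hx))).pow k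
  · exact (Complex.continuous_ofReal.comp
      (Real.continuous_exp.comp continuous_neg)).continuousOn

lemma fk_top (k : ℕ) : ∀ a : ℝ, fk k =O[atTop] (· ^ (-a)) := by
  induction k with
  | zero =>
    intro a
    rw [show fk 0 = fun t : ℝ => ((Real.exp (-t) : ℂ)) by funext t; simp [fk]]
    rw [← isBigO_norm_left]
    simp_rw [Complex.norm_real, isBigO_norm_left]
    simpa only [neg_one_mul] using (isLittleO_exp_neg_mul_rpow_atTop zero_lt_one _).isBigO
  | succ k ih =>
    intro a
    rw [← fk_succ]
    exact isBigO_rpow_top_log_smul (lt_add_one a) (ih (a+1))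

lemma fk_bot (k : ℕ) : ∀ b : ℝ, 0 < b → fk k =O[𝓝[>] 0] (· ^ (-b)) := by
  induction k with
  | zero =>
    intro b hb
    refine IsBigO.of_bound 1 ?_
    filter_upwards [Ioo_mem_nhdsGT_of_mem (by norm_num : (0:ℝ) ∈ Ico 0 1)] with t ht
    have h1 : ‖fk 0 t‖ ≤ 1 := by
      have : fk 0 t = ((Real.exp (-t) : ℝ) : ℂ) := by simp [fk]
      rw [this, Complex.norm_real, Real.norm_eq_abs, abs_of_pos (Real.exp_pos _),
        Real.exp_le_one_iff]
      linarith [ht.1]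
    have h2 : (1:ℝ) ≤ t ^ (-b) := by
      exact Real.one_le_rpow_of_pos_of_le_one_of_nonpos ht.1 ht.2.le (by linarith)
    calc ‖fk 0 t‖ ≤ 1 := h1
      _ ≤ ‖t ^ (-b)‖ := by rwa [Real.norm_eq_abs, abs_of_pos (Real.rpow_pos_of_pos ht.1 _)]
      _ = 1 * ‖t ^ (-b)‖ := (one_mul _).symm
  | succ k ih =>
    intro b hb
    rw [← fk_succ]
    exact isBigO_rpow_zero_log_smul (by linarith : b/2 < b) (ih (b/2) (by linarith))

lemma fk_conv {k : ℕ} {s : ℂ} (hs : 0 < s.re) : MellinConvergent (fk k) s :=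
  mellinConvergent_of_isBigO_rpow (fk_locInt k) (fk_top k (s.re + 1)) (lt_add_one _)
    (fk_bot k (s.re / 2) (by linarith)) (by linarith)

lemma fk_deriv {k : ℕ} {s : ℂ} (hs : 0 < s.re) :
    HasDerivAt (mellin (fk k)) (mellin (fk (k+1)) s) s := by
  have := (mellin_hasDerivAt_of_isBigO_rpow (fk_locInt k) (fk_top k (s.re + 1)) (lt_add_one _)
    (fk_bot k (s.re / 2) (by linarith)) (by linarith : s.re/2 < s.re)).2
  rwa [fk_succ] at this

lemma gamma_iter (k : ℕ) : ∀ s : ℂ, 0 < s.re →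
    iteratedDeriv k Complex.Gamma s = mellin (fk k) s := by
  induction k with
  | zero =>
    intro s hs
    rw [iteratedDeriv_zero, Complex.Gamma_eq_integral hs, Complex.GammaIntegral_eq_mellin]
    congr 1
    funext t; simp [fk]
  | succ k ih =>
    intro s hs
    rw [iteratedDeriv_succ]
    have hev : iteratedDeriv k Complex.Gamma =ᶠ[nhds s] mellin (fk k) := by
      have : {z : ℂ | 0 < z.re} ∈ nhds s :=
        (isOpen_lt continuous_const Complex.continuous_re).mem_nhds hs
      filter_upwards [this] with z hz using ih z hz
    rw [hev.deriv_eq, (fk_deriv hs).deriv]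

lemma Npow {n : ℕ} (k : ℕ) :
    ∀ i j : Fin n, ((Matrix.of fun i j : Fin n =>
        if (j : ℕ) = (i : ℕ) + 1 then (1:ℂ) else 0) ^ k) i j
      = if (j : ℕ) = (i : ℕ) + k then 1 else 0 := by
  induction k with
  | zero =>
    intro i j
    simp [Matrix.one_apply, eq_comm, Fin.val_eq_val]
  | succ k ih =>
    intro i j
    rw [pow_succ, Matrix.mul_apply]
    simp only [ih, Matrix.of_apply]
    by_cases h : (i : ℕ) + k < n
    · rw [Finset.sum_eq_single (⟨(i : ℕ) + k, h⟩ : Fin n)]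
      · simp [← add_assoc]
      · intro l _ hl
        rw [if_neg, zero_mul]
        intro hc
        exact hl (Fin.ext hc)
      · simp
    · rw [Finset.sum_eq_zero, if_neg]
      · omega
      · intro l _
        rw [if_neg, zero_mul]
        omega

lemma Npow_n {n : ℕ} :
    (Matrix.of fun i j : Fin n =>
        if (j : ℕ) = (i : ℕ) + 1 then (1:ℂ) else 0) ^ n = 0 := by
  ext i j
  rw [Npow, if_neg, Matrix.zero_apply]
  omega

lemma exp_z_one {n : ℕ} (z : ℂ) :
    NormedSpace.exp (z • (1 : Matrix (Fin n) (Fin n) ℂ)) = Complex.exp z • 1 := by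
  have h : z • (1 : Matrix (Fin n) (Fin n) ℂ) = Matrix.diagonal (fun _ => z) := by
    ext i j
    simp [Matrix.one_apply, Matrix.diagonal_apply]
  rw [h, Matrix.exp_diagonal]
  ext i j
  simp [Matrix.diagonal_apply, Pi.exp_def, Matrix.one_apply, ← Complex.exp_eq_exp_ℂ]

lemma exp_formula {n : ℕ} (lam : ℂ) (N : Matrix (Fin n) (Fin n) ℂ) (hz : N ^ n = 0) (c : ℂ) :
    NormedSpace.exp (c • ((lam - 1) • (1 : Matrix (Fin n) (Fin n) ℂ) + N)) =
      Complex.exp (c * (lam - 1)) •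
        ∑ k ∈ Finset.range n, (c ^ k * ((k.factorial : ℂ))⁻¹) • N ^ k := by
  have hcN : NormedSpace.exp (c • N)
      = ∑ k ∈ Finset.range n, (c ^ k * ((k.factorial : ℂ))⁻¹) • N ^ k := by
    simp only [NormedSpace.exp_eq_tsum ℂ]
    rw [tsum_eq_sum (s := Finset.range n) ?_]
    · refine Finset.sum_congr rfl fun k _ => ?_
      rw [smul_pow, smul_smul, mul_comm]
    · intro k hk
      have hnk : n ≤ k := le_of_not_gt (fun h => hk (Finset.mem_range.mpr h))
      obtain ⟨m, rfl⟩ := Nat.exists_eq_add_of_le hnk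
      rw [smul_pow, pow_add N n m, hz, zero_mul, smul_zero, smul_zero]
  rw [smul_add, smul_smul]
  rw [Matrix.exp_add_of_commute _ _ ((Commute.one_left (c • N)).smul_left _)]
  rw [exp_z_one, hcN, smul_mul_assoc, one_mul]


theorem stmt_17 (lam : ℂ) (hlam : 0 < lam.re) (n : ℕ) (hn : 1 ≤ n)
    (N : Matrix (Fin n) (Fin n) ℂ)
    (hN : N = Matrix.of fun i j : Fin n => if (j : ℕ) = (i : ℕ) + 1 then (1:ℂ) else 0) :
    (Matrix.of fun i j : Fin n => ∫ t in Set.Ioi (0:ℝ), (Real.exp (-t) : ℂ) *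
        (NormedSpace.exp ((Real.log t : ℂ) •
          ((lam - 1) • (1 : Matrix (Fin n) (Fin n) ℂ) + N)) i j)) =
      ∑ k ∈ Finset.range n,
        (iteratedDeriv k Complex.Gamma lam / k.factorial) • N ^ k := by
  have hNn : N ^ n = 0 := by rw [hN]; exact Npow_n
  ext i j
  simp only [Matrix.of_apply]
  have hRHS : (∑ k ∈ Finset.range n,
      (iteratedDeriv k Complex.Gamma lam / k.factorial) • N ^ k) i j
      = ∑ k ∈ Finset.range n,
        (iteratedDeriv k Complex.Gamma lam / k.factorial) * ((N ^ k) i j) := by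
    rw [Matrix.sum_apply]
    exact Finset.sum_congr rfl fun k _ => by rw [Matrix.smul_apply, smul_eq_mul]
  rw [hRHS]
  have hint : ∀ t ∈ Ioi (0:ℝ), (Real.exp (-t) : ℂ) *
      (NormedSpace.exp ((Real.log t : ℂ) •
        ((lam - 1) • (1 : Matrix (Fin n) (Fin n) ℂ) + N)) i j)
      = ∑ k ∈ Finset.range n,
          (((N ^ k) i j) * ((k.factorial : ℂ))⁻¹) * ((t:ℂ) ^ (lam - 1) • fk k t) := by
    intro t ht
    rw [exp_formula lam N hNn]
    have hc : Complex.exp ((Real.log t : ℂ) * (lam - 1)) = (t:ℂ) ^ (lam - 1) := by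
      rw [Complex.cpow_def_of_ne_zero (by exact_mod_cast ne_of_gt ht),
        Complex.ofReal_log ht.le]
    rw [Matrix.smul_apply, Matrix.sum_apply, smul_eq_mul, hc, Finset.mul_sum, Finset.mul_sum]
    refine Finset.sum_congr rfl fun k _ => ?_
    rw [Matrix.smul_apply, smul_eq_mul, smul_eq_mul]
    simp only [fk]
    ring
  rw [setIntegral_congr_fun measurableSet_Ioi hint, integral_finset_sum]
  · refine Finset.sum_congr rfl fun k _ => ?_
    rw [MeasureTheory.integral_const_mul]
    have hm : ∫ t in Ioi (0:ℝ), (t:ℂ) ^ (lam - 1) • fk k t = mellin (fk k) lam := rfl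
    rw [hm, ← gamma_iter k lam hlam]
    have hf : (k.factorial : ℂ) ≠ 0 := Nat.cast_ne_zero.mpr k.factorial_ne_zero
    field_simp
  · intro k _
    exact (fk_conv hlam).const_mul _
end
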